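/- arXiv:1109.3848 — 5 statements merged into one kernel-verified Lean document; each statement's English description precedes it below -/
import Mathlib

section
/- A torsion-free commutative ring A is binomial (i.e., all binomial coefficients a(a−1)···(a−n+1)/n! of elements a ∈ A exist in A inside A ⊗ ℚ) if and only if for every a ∈ A there exists a ring homomorphism Int(ℤ) → A sending X to a. -/
set_option linter.unusedSectionVars false
open Polynomial TensorProduct

variable (D K : Type*) [CommRing D] [IsDomain D] [Field K] [Algebra D K] [IsFractionRing D K]

/-- The ring of integer-valued polynomials `Int(D) ⊆ K[X]`. -/
noncomputable def IntD : Subalgebra D (Polynomial K) :=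
  ⨅ a : D, Subalgebra.comap ((Polynomial.aeval (algebraMap D K a)).restrictScalars D)
    (Algebra.ofId D K).range

theorem mem_IntD {f : Polynomial K} :
    f ∈ IntD D K ↔
      ∀ a : D, ∃ d : D, algebraMap D K d = Polynomial.eval (algebraMap D K a) f := by
  simp [IntD, Algebra.mem_iInf, Subalgebra.mem_comap, Algebra.ofId_apply, Algebra.mem_bot,
    Set.mem_range]

/-- `X` as an element of `Int(D)`. -/
noncomputable def Xint : IntD D K := ⟨Polynomial.X, (mem_IntD D K).mpr fun a => ⟨a, by simp⟩⟩

/-! ### Auxiliary lemmas -/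

theorem iota_inj (A : Type*) [CommRing A] [NoZeroSMulDivisors ℤ A] :
    Function.Injective (fun a : A => (1:ℚ) ⊗ₜ[ℤ] a) := by
  have hl : IsLocalizedModule (nonZeroDivisors ℤ) (TensorProduct.mk ℤ ℚ A 1) :=
    (isLocalizedModule_iff_isBaseChange (nonZeroDivisors ℤ) ℚ _).mpr
      (TensorProduct.isBaseChange ℤ A ℚ)
  intro a b hab
  have h0 : TensorProduct.mk ℤ ℚ A 1 (a - b) = 0 := by
    simp only [TensorProduct.mk_apply, TensorProduct.tmul_sub]
    simp only at hab
    rw [hab, sub_self]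
  obtain ⟨s, hs⟩ := (IsLocalizedModule.eq_zero_iff (nonZeroDivisors ℤ) _).mp h0
  have hne : (s : ℤ) ≠ 0 := nonZeroDivisors.coe_ne_zero s
  have hs' : (s : ℤ) • (a - b) = 0 := hs
  rcases smul_eq_zero.mp hs' with h | h
  · exact absurd h hne
  · exact sub_eq_zero.mp h

theorem desc_prod (x : ℤ) (n : ℕ) :
    (descPochhammer ℤ n).eval x = ∏ i ∈ Finset.range n, (x - i) := by
  induction n with
  | zero => simp
  | succ n ih =>
    rw [descPochhammer_succ_right, Finset.prod_range_succ, ← ih]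
    simp [mul_comm]

theorem fact_dvd_prod (x : ℤ) (n : ℕ) :
    (n.factorial : ℤ) ∣ ∏ i ∈ Finset.range n, (x - i) := by
  rw [← desc_prod, Polynomial.eval_eq_smeval, Ring.descPochhammer_eq_factorial_smul_choose]
  exact ⟨Ring.choose x n, by rw [nsmul_eq_mul]⟩

noncomputable def prodPoly (n : ℕ) : Polynomial ℚ := ∏ i ∈ Finset.range n, (X - (i : ℚ[X]))

noncomputable def binPoly (n : ℕ) : Polynomial ℚ := C ((n.factorial : ℚ)⁻¹) * prodPoly n

theorem prodPoly_monic (n : ℕ) : (prodPoly n).Monic := by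
  apply monic_prod_of_monic
  intro i _
  simpa using monic_X_sub_C (i : ℚ)

theorem prodPoly_natDegree (n : ℕ) : (prodPoly n).natDegree = n := by
  rw [prodPoly]
  rw [Polynomial.natDegree_prod]
  · have : ∀ i : ℕ, (X - (i:ℚ[X])).natDegree = 1 := by
      intro i
      rw [show ((i:ℚ[X]) = C (i:ℚ)) by simp, natDegree_X_sub_C]
    simp [this]
  · intro i _
    simpa using (monic_X_sub_C (i:ℚ)).ne_zero

theorem prodPoly_eval (x : ℚ) (n : ℕ) :
    (prodPoly n).eval x = ∏ i ∈ Finset.range n, (x - i) := by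
  rw [prodPoly, eval_prod]
  exact Finset.prod_congr rfl fun i _ => by simp

theorem binPoly_natDegree (n : ℕ) : (binPoly n).natDegree = n := by
  rw [binPoly, natDegree_C_mul (by positivity), prodPoly_natDegree]

theorem binPoly_coeff_self (n : ℕ) : (binPoly n).coeff n = (n.factorial : ℚ)⁻¹ := by
  rw [binPoly, coeff_C_mul]
  have : (prodPoly n).coeff n = 1 := by
    have := (prodPoly_monic n).leadingCoeff
    rwa [Polynomial.leadingCoeff, prodPoly_natDegree] at this
  rw [this, mul_one]

theorem prodPoly_mem (n : ℕ) : prodPoly n ∈ IntD ℤ ℚ := by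
  rw [mem_IntD]
  intro x
  refine ⟨∏ i ∈ Finset.range n, (x - i), ?_⟩
  rw [prodPoly_eval]
  push_cast
  rfl

theorem binPoly_mem (n : ℕ) : binPoly n ∈ IntD ℤ ℚ := by
  rw [mem_IntD]
  intro x
  obtain ⟨c, hc⟩ := fact_dvd_prod x n
  refine ⟨c, ?_⟩
  rw [binPoly, eval_mul, eval_C, prodPoly_eval]
  have h1 : ((algebraMap ℤ ℚ) x) = (x : ℚ) := rfl
  have h2 : ∏ i ∈ Finset.range n, ((x:ℚ) - (i:ℚ)) = ((∏ i ∈ Finset.range n, (x - (i:ℤ)) : ℤ) : ℚ) := by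
    push_cast; rfl
  rw [h1, h2, hc]
  push_cast
  rw [mul_comm ((n.factorial:ℚ)⁻¹)]
  rw [mul_comm (n.factorial:ℚ) (c:ℚ), mul_assoc,
    mul_inv_cancel₀ (by positivity : (n.factorial:ℚ) ≠ 0), mul_one]
  rfl

theorem comp_coeff (f : ℚ[X]) (N j : ℕ) (h : f.natDegree < N) :
    (f.comp (X + 1)).coeff j = ∑ k ∈ Finset.range N, f.coeff k * (k.choose j) := by
  conv_lhs => rw [f.as_sum_range' N h]
  rw [show ((∑ i ∈ Finset.range N, (monomial i) (f.coeff i)).comp (X+1))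
      = ∑ i ∈ Finset.range N, ((monomial i) (f.coeff i)).comp (X+1) by
    simp [Polynomial.comp, eval₂_finset_sum]]
  rw [finset_sum_coeff]
  apply Finset.sum_congr rfl
  intro k _
  rw [show ((monomial k) (f.coeff k)).comp (X+1) = C (f.coeff k) * (X+1)^k by
    rw [← C_mul_X_pow_eq_monomial, mul_comp, C_comp, X_pow_comp]]
  rw [coeff_C_mul, coeff_X_add_one_pow]

theorem delta_mem {f : ℚ[X]} (hf : f ∈ IntD ℤ ℚ) : f.comp (X + 1) - f ∈ IntD ℤ ℚ := by
  have h1 : f.comp (X + 1) ∈ IntD ℤ ℚ := by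
    rw [mem_IntD]
    intro x
    obtain ⟨m, hm⟩ := (mem_IntD ℤ ℚ).mp hf (x + 1)
    refine ⟨m, ?_⟩
    rw [eval_comp, eval_add, eval_X, eval_one]
    rw [hm]
    congr 1
    push_cast
    rfl
  exact sub_mem h1 hf

theorem coeff_int : ∀ (d : ℕ) (f : ℚ[X]), f ∈ IntD ℤ ℚ → f.natDegree ≤ d →
    ∃ m : ℤ, (m : ℚ) = d.factorial * f.coeff d := by
  intro d
  induction d with
  | zero =>
    intro f hf _
    obtain ⟨m, hm⟩ := (mem_IntD ℤ ℚ).mp hf 0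
    refine ⟨m, ?_⟩
    rw [Nat.factorial_zero, Nat.cast_one, one_mul, coeff_zero_eq_eval_zero]
    rw [show ((m:ℚ)) = algebraMap ℤ ℚ m from rfl, hm]
    norm_num
  | succ d ih =>
    intro f hf hd
    set g := f.comp (X + 1) - f with hgdef
    have hgmem : g ∈ IntD ℤ ℚ := delta_mem hf
    have hN : f.natDegree < d + 2 := lt_of_le_of_lt hd (by omega)
    have hdeg : g.natDegree ≤ d := by
      rw [natDegree_le_iff_coeff_eq_zero]
      intro j hj
      rw [hgdef, coeff_sub, comp_coeff f (d+2) j hN]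
      have hsum : ∑ k ∈ Finset.range (d+2), f.coeff k * (k.choose j : ℚ) =
          f.coeff j * (j.choose j : ℚ) := by
        apply Finset.sum_eq_single
        · intro b hb hbj
          have hb' : b < j := by
            have := Finset.mem_range.mp hb
            omega
          rw [Nat.choose_eq_zero_of_lt hb', Nat.cast_zero, mul_zero]
        · intro hjs
          have : f.natDegree < j := by
            have := Finset.mem_range.not.mp hjs
            omega
          rw [coeff_eq_zero_of_natDegree_lt this, zero_mul]
      rw [hsum, Nat.choose_self, Nat.cast_one, mul_one, sub_self]
    have hcd : g.coeff d = (d + 1 : ℚ) * f.coeff (d+1) := by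
      rw [hgdef, coeff_sub, comp_coeff f (d+2) d hN, Finset.sum_range_succ]
      have hsum : ∑ k ∈ Finset.range (d+1), f.coeff k * (k.choose d : ℚ) =
          f.coeff d * (d.choose d : ℚ) := by
        apply Finset.sum_eq_single
        · intro b hb hbj
          have hb' : b < d := by
            have := Finset.mem_range.mp hb
            omega
          rw [Nat.choose_eq_zero_of_lt hb', Nat.cast_zero, mul_zero]
        · intro hjs
          exact absurd (Finset.self_mem_range_succ d) hjs
      rw [hsum, Nat.choose_self, Nat.cast_one, mul_one, Nat.choose_succ_self_right]
      push_cast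
      ring
    obtain ⟨m, hm⟩ := ih g hgmem hdeg
    refine ⟨m, ?_⟩
    rw [hm, hcd, Nat.factorial_succ]
    push_cast
    ring

set_option synthInstance.maxHeartbeats 1000000 in
theorem stmt_2 (A : Type*) [CommRing A] [NoZeroSMulDivisors ℤ A] :
    (∀ (a : A) (n : ℕ), 0 < n →
        ∃ b : A, ((1 : ℚ) ⊗ₜ[ℤ] b) * (n.factorial : ℚ ⊗[ℤ] A) =
          (1 : ℚ) ⊗ₜ[ℤ] ∏ i ∈ Finset.range n, (a - (i : A))) ↔
      ∀ a : A, ∃ φ : IntD ℤ ℚ →+* A, φ (Xint ℤ ℚ) = a := by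
  constructor
  · intro H a
    have inj := iota_inj A
    set ι : A →ₐ[ℤ] ℚ ⊗[ℤ] A := Algebra.TensorProduct.includeRight with hι
    have hιap : ∀ x : A, ι x = (1:ℚ) ⊗ₜ[ℤ] x := fun x => rfl
    have keyP : ∀ (n : ℕ) (f : ℚ[X]), f.natDegree ≤ n → f ∈ IntD ℤ ℚ →
        ∃ b : A, (1:ℚ) ⊗ₜ[ℤ] b = aeval ((1:ℚ) ⊗ₜ[ℤ] a) f := by
      intro n
      induction n with
      | zero =>
        intro f hdeg hf
        obtain ⟨m, hm⟩ := (mem_IntD ℤ ℚ).mp hf 0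
        refine ⟨(m : A), ?_⟩
        have hfc : f = C (f.coeff 0) := eq_C_of_natDegree_le_zero hdeg
        have hc0 : f.coeff 0 = (m : ℚ) := by
          rw [coeff_zero_eq_eval_zero, show ((m:ℚ)) = algebraMap ℤ ℚ m from rfl, hm]
          norm_num
        rw [hfc, hc0, aeval_C]
        rw [show algebraMap ℚ (ℚ ⊗[ℤ] A) ((m:ℤ):ℚ) = ((m:ℤ) : ℚ ⊗[ℤ] A) from
          map_intCast _ m]
        rw [← hιap, map_intCast ι m]
      | succ n ih =>
        intro f hdeg hf
        by_cases hle : f.natDegree ≤ n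
        · exact ih f hle hf
        obtain ⟨m, hm⟩ := coeff_int (n+1) f hf hdeg
        set g : ℚ[X] := f - (m : ℚ[X]) * binPoly (n+1) with hgdef
        have hgmem : g ∈ IntD ℤ ℚ := by
          apply sub_mem hf
          refine mul_mem ?_ (binPoly_mem (n+1))
          rw [show ((m : ℚ[X])) = algebraMap ℤ ℚ[X] m by simp]
          exact Subalgebra.algebraMap_mem _ m
        have hbdeg := binPoly_natDegree (n+1)
        have hgdeg : g.natDegree ≤ n := by
          rw [natDegree_le_iff_coeff_eq_zero]
          intro j hj
          rw [hgdef, coeff_sub, show ((m:ℚ[X])) = C ((m:ℤ):ℚ) by push_cast; rfl,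
            coeff_C_mul]
          rcases eq_or_lt_of_le (Nat.succ_le_of_lt hj) with hje | hjl
          · rw [← hje, binPoly_coeff_self, hm]
            field_simp
            ring
          · rw [coeff_eq_zero_of_natDegree_lt (lt_of_le_of_lt hdeg hjl),
              coeff_eq_zero_of_natDegree_lt (by omega : (binPoly (n+1)).natDegree < j),
              mul_zero, sub_zero]
        obtain ⟨b', hb'⟩ := ih g hgdeg hgmem
        obtain ⟨b, hb⟩ := H a (n+1) (Nat.succ_pos n)
        have hprod_ev : aeval ((1:ℚ) ⊗ₜ[ℤ] a) (prodPoly (n+1))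
            = (1:ℚ) ⊗ₜ[ℤ] ∏ i ∈ Finset.range (n+1), (a - (i:A)) := by
          rw [prodPoly, map_prod,
            show ((1:ℚ) ⊗ₜ[ℤ] ∏ i ∈ Finset.range (n+1), (a - (i:A)))
              = ∏ i ∈ Finset.range (n+1), ((1:ℚ) ⊗ₜ[ℤ] (a - (i:A))) from map_prod ι _ _]
          apply Finset.prod_congr rfl
          intro i _
          rw [map_sub, aeval_X, TensorProduct.tmul_sub]
          congr 1
          rw [map_natCast (aeval ((1:ℚ) ⊗ₜ[ℤ] a)) i]
          exact (map_natCast ι i).symm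
        have hbin_ev : aeval ((1:ℚ) ⊗ₜ[ℤ] a) (binPoly (n+1)) = (1:ℚ) ⊗ₜ[ℤ] b := by
          rw [binPoly, map_mul, aeval_C, hprod_ev, ← hb]
          rw [show (((n+1).factorial : ℚ ⊗[ℤ] A))
              = algebraMap ℚ (ℚ ⊗[ℤ] A) (((n+1).factorial : ℕ) : ℚ) from
            (map_natCast (algebraMap ℚ (ℚ ⊗[ℤ] A)) _).symm]
          rw [mul_comm ((1:ℚ) ⊗ₜ[ℤ] b) _, ← mul_assoc, ← map_mul,
            inv_mul_cancel₀ (by positivity : (((n+1).factorial : ℕ) : ℚ) ≠ 0), map_one, one_mul]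
        refine ⟨b' + (m : A) * b, ?_⟩
        have hfg : f = g + (m : ℚ[X]) * binPoly (n+1) := by rw [hgdef]; ring
        rw [hfg, map_add, map_mul, ← hb', hbin_ev,
          show (((m:ℤ) : ℚ[X]) : ℚ[X]) = C ((m:ℤ):ℚ) by push_cast; rfl,
          aeval_C, map_intCast (algebraMap ℚ (ℚ ⊗[ℤ] A)) m]
        rw [TensorProduct.tmul_add]
        congr 1
        rw [show ((m:ℤ) : ℚ ⊗[ℤ] A) = ι ((m:ℤ):A) from (map_intCast ι m).symm, hιap,
          Algebra.TensorProduct.tmul_mul_tmul, one_mul]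
    have key : ∀ f : IntD ℤ ℚ, ∃ b : A, (1:ℚ) ⊗ₜ[ℤ] b = aeval ((1:ℚ) ⊗ₜ[ℤ] a) (f : ℚ[X]) :=
      fun f => keyP (f : ℚ[X]).natDegree f.1 le_rfl f.2
    choose Φ hΦ using key
    have hone : Φ 1 = 1 := by
      apply inj
      show (1:ℚ) ⊗ₜ[ℤ] Φ 1 = (1:ℚ) ⊗ₜ[ℤ] (1:A)
      rw [hΦ, OneMemClass.coe_one, map_one, Algebra.TensorProduct.one_def]
    have hmul : ∀ x y, Φ (x * y) = Φ x * Φ y := by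
      intro x y
      apply inj
      show (1:ℚ) ⊗ₜ[ℤ] Φ (x * y) = (1:ℚ) ⊗ₜ[ℤ] (Φ x * Φ y)
      rw [hΦ, MulMemClass.coe_mul, map_mul, ← hΦ, ← hΦ,
        Algebra.TensorProduct.tmul_mul_tmul, one_mul]
    have hadd : ∀ x y, Φ (x + y) = Φ x + Φ y := by
      intro x y
      apply inj
      show (1:ℚ) ⊗ₜ[ℤ] Φ (x + y) = (1:ℚ) ⊗ₜ[ℤ] (Φ x + Φ y)
      rw [hΦ, AddMemClass.coe_add, map_add, ← hΦ, ← hΦ, TensorProduct.tmul_add]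
    refine ⟨RingHom.mk' ⟨⟨Φ, hone⟩, hmul⟩ hadd, ?_⟩
    apply inj
    show (1:ℚ) ⊗ₜ[ℤ] Φ (Xint ℤ ℚ) = (1:ℚ) ⊗ₜ[ℤ] a
    rw [hΦ]
    show (aeval ((1:ℚ) ⊗ₜ[ℤ] a)) X = _
    rw [aeval_X]
  · intro H a n hn
    obtain ⟨φ, hφ⟩ := H a
    set binElt : IntD ℤ ℚ := ⟨binPoly n, binPoly_mem n⟩ with hbin
    set prodElt : IntD ℤ ℚ := ⟨prodPoly n, prodPoly_mem n⟩ with hprod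
    have h1 : (n.factorial : IntD ℤ ℚ) * binElt = prodElt := by
      apply Subtype.ext
      show ((n.factorial : IntD ℤ ℚ) : ℚ[X]) * binPoly n = prodPoly n
      rw [show (((n.factorial : IntD ℤ ℚ)) : ℚ[X]) = ((n.factorial : ℕ) : ℚ[X]) by
        exact_mod_cast rfl]
      rw [binPoly, ← mul_assoc, show ((n.factorial : ℕ) : ℚ[X]) = C ((n.factorial : ℕ) : ℚ) by
        push_cast; rfl]
      rw [← C_mul, mul_inv_cancel₀ (by positivity : ((n.factorial:ℕ) : ℚ) ≠ 0), C_1, one_mul]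
    have h2 : prodElt = ∏ i ∈ Finset.range n, (Xint ℤ ℚ - (i : IntD ℤ ℚ)) := by
      apply Subtype.ext
      rw [hprod]
      show prodPoly n = _
      rw [show (((∏ i ∈ Finset.range n, (Xint ℤ ℚ - (i : IntD ℤ ℚ))) : IntD ℤ ℚ) : ℚ[X])
          = ∏ i ∈ Finset.range n, ((Xint ℤ ℚ - (i : IntD ℤ ℚ) : IntD ℤ ℚ) : ℚ[X]) from
        map_prod ((IntD ℤ ℚ).val) _ _]
      rw [prodPoly]
      apply Finset.prod_congr rfl
      intro i _
      push_cast
      rfl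
    have h3 : φ prodElt = ∏ i ∈ Finset.range n, (a - (i : A)) := by
      rw [h2, map_prod]
      apply Finset.prod_congr rfl
      intro i _
      rw [map_sub, hφ, map_natCast]
    have h4 : (n.factorial : A) * φ binElt = ∏ i ∈ Finset.range n, (a - (i : A)) := by
      rw [← h3, ← h1, map_mul, map_natCast]
    refine ⟨φ binElt, ?_⟩
    have : (1:ℚ) ⊗ₜ[ℤ] (φ binElt) * ((n.factorial : ℕ) : ℚ ⊗[ℤ] A)
        = (1:ℚ) ⊗ₜ[ℤ] ((n.factorial : ℕ) * φ binElt) := by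
      rw [show ((n.factorial : ℕ) : ℚ ⊗[ℤ] A)
          = (1:ℚ) ⊗ₜ[ℤ] ((n.factorial : ℕ) : A) from
        (map_natCast (Algebra.TensorProduct.includeRight : A →ₐ[ℤ] ℚ ⊗[ℤ] A) n.factorial).symm]
      rw [Algebra.TensorProduct.tmul_mul_tmul, one_mul, mul_comm]
    rw [this, h4]
end

section
/- Let D be an integral domain whose tensor square Int(D) ⊗_D Int(D) embeds into Int(D²) as the subring Int_⊗(D²) of sums of products g(X)h(Y) with g,h ∈ Int(D). If Int_⊗(Dⁿ) is a WPC extension of D for some integer n > 1, then Int_⊗(D²) is a WPC extension of D. -/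
set_option linter.unusedSectionVars false
open Polynomial TensorProduct

variable (D K : Type*) [CommRing D] [IsDomain D] [Field K] [Algebra D K] [IsFractionRing D K]

/-- The set of products `f₁(X₁)⋯fₙ(Xₙ)` with each `fᵢ ∈ Int(D)`. -/
def prodTensorSet (n : ℕ) : Set (MvPolynomial (Fin n) K) :=
  {p | ∃ g : Fin n → Polynomial K, (∀ i, g i ∈ IntD D K) ∧
    p = ∏ i, Polynomial.aeval (MvPolynomial.X i) (g i)}

/-- `Int_⊗(Dⁿ)`: the sums of products `f₁(X₁)⋯fₙ(Xₙ)` with each `fᵢ ∈ Int(D)`,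
i.e. the image of the canonical map `Int(D)^{⊗n} → Int(Dⁿ)`. -/
noncomputable def IntOtimes (n : ℕ) : Submodule D (MvPolynomial (Fin n) K) :=
  Submodule.span D (prodTensorSet D K n)

/-- A subset `S` of `K[X₁,…,Xₙ]` is a WPC extension of `D` if `g(S) ⊆ S` for
all `g ∈ Int(D)`. -/
def WPCset (n : ℕ) (S : Set (MvPolynomial (Fin n) K)) : Prop :=
  ∀ g ∈ IntD D K, ∀ a ∈ S, Polynomial.aeval a g ∈ S

/-- The canonical map `θ₂ : Int(D) ⊗_D Int(D) → Int(D²) ⊆ K[X,Y]`. -/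
noncomputable def theta2 : (IntD D K) ⊗[D] (IntD D K) →ₐ[D] MvPolynomial (Fin 2) K :=
  Algebra.TensorProduct.productMap
    (((Polynomial.aeval (MvPolynomial.X 0)).restrictScalars D).comp (IntD D K).val)
    (((Polynomial.aeval (MvPolynomial.X 1)).restrictScalars D).comp (IntD D K).val)

theorem stmt_5 (hinj : Function.Injective (theta2 D K))
    (n : ℕ) (hn : 1 < n) (h : WPCset D K n (IntOtimes D K n)) :
    WPCset D K 2 (IntOtimes D K 2) := by
  classical
  intro g hg a ha
  set φ : MvPolynomial (Fin 2) K →ₐ[K] MvPolynomial (Fin n) K :=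
    MvPolynomial.rename (Fin.castLE hn) with hφdef
  set t : Fin n → MvPolynomial (Fin 2) K :=
    fun i => if h : (i : ℕ) < 2 then MvPolynomial.X ⟨i, h⟩ else 0 with htdef
  set r : MvPolynomial (Fin n) K →ₐ[K] MvPolynomial (Fin 2) K := MvPolynomial.aeval t with hrdef
  have htlt : ∀ (j : Fin 2), t (Fin.castLE hn j) = MvPolynomial.X j := by
    intro j
    simp only [htdef]
    rw [dif_pos (show ((Fin.castLE hn j : Fin n) : ℕ) < 2 from j.isLt)]
    congr 1
  have hrφ : ∀ p, r (φ p) = p := by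
    intro p
    show MvPolynomial.aeval t (MvPolynomial.rename (Fin.castLE hn) p) = p
    rw [MvPolynomial.aeval_rename]
    have ht : (t ∘ Fin.castLE hn) = MvPolynomial.X := funext htlt
    rw [ht]
    simp [MvPolynomial.aeval_X_left_apply]
  have hs : ∀ (i : Fin n), i ∈ Finset.univ \ Finset.map (Fin.castLEEmb hn) Finset.univ ↔
      ¬ ((i : ℕ) < 2) := by
    intro i
    constructor
    · intro hi hlt
      exact (Finset.mem_sdiff.mp hi).2
        (Finset.mem_map.mpr ⟨⟨(i : ℕ), hlt⟩, Finset.mem_univ _, Fin.ext rfl⟩)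
    · intro h2
      refine Finset.mem_sdiff.mpr ⟨Finset.mem_univ _, fun hmem => ?_⟩
      obtain ⟨j, _, rfl⟩ := Finset.mem_map.mp hmem
      exact h2 j.isLt
  -- φ maps IntOtimes 2 into IntOtimes n
  have hφmem : ∀ q ∈ IntOtimes D K 2, φ q ∈ IntOtimes D K n := by
    intro q hq
    have hle : Submodule.map (φ.toLinearMap.restrictScalars D) (IntOtimes D K 2)
        ≤ IntOtimes D K n := by
      rw [IntOtimes, Submodule.map_span, Submodule.span_le]
      rintro _ ⟨p, ⟨gs, hgs, rfl⟩, rfl⟩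
      apply Submodule.subset_span
      refine ⟨fun i => if h : (i : ℕ) < 2 then gs ⟨i, h⟩ else 1, ?_, ?_⟩
      · intro i
        dsimp only
        by_cases h2 : (i : ℕ) < 2
        · rw [dif_pos h2]; exact hgs _
        · rw [dif_neg h2]; exact one_mem _
      · simp only [LinearMap.coe_restrictScalars, AlgHom.toLinearMap_apply, map_prod]
        rw [← Finset.prod_subset (Finset.subset_univ
            (Finset.map (Fin.castLEEmb hn) Finset.univ))
            (fun i _ hi => by
              rw [dif_neg ((hs i).mp (Finset.mem_sdiff.mpr ⟨Finset.mem_univ _, hi⟩))]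
              simp)]
        rw [Finset.prod_map]
        refine Finset.prod_congr rfl fun i _ => ?_
        rw [← Polynomial.aeval_algHom_apply]
        simp only [hφdef, MvPolynomial.rename_X, Fin.castLEEmb_apply]
        rw [dif_pos (show ((Fin.castLE hn i : Fin n) : ℕ) < 2 from i.isLt)]
        congr 1
    exact hle ⟨q, hq, rfl⟩
  -- r maps IntOtimes n into IntOtimes 2
  have hrmem : ∀ q ∈ IntOtimes D K n, r q ∈ IntOtimes D K 2 := by
    intro q hq
    have hle : Submodule.map (r.toLinearMap.restrictScalars D) (IntOtimes D K n)
        ≤ IntOtimes D K 2 := by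
      rw [IntOtimes, Submodule.map_span, Submodule.span_le]
      rintro _ ⟨p, ⟨gs, hgs, rfl⟩, rfl⟩
      simp only [LinearMap.coe_restrictScalars, AlgHom.toLinearMap_apply, map_prod,
        SetLike.mem_coe]
      set s : Finset (Fin n) := Finset.map (Fin.castLEEmb hn) Finset.univ with hsdef
      rw [← Finset.prod_sdiff (f := fun i => r (Polynomial.aeval (MvPolynomial.X i) (gs i)))
        (Finset.subset_univ s)]
      have hconst : ∏ i ∈ Finset.univ \ s, r (Polynomial.aeval (MvPolynomial.X i) (gs i))
          ∈ (algebraMap D (MvPolynomial (Fin 2) K)).range := by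
        refine Subring.prod_mem _ fun i hi => ?_
        have h2 : ¬ (i : ℕ) < 2 := (hs i).mp hi
        have hrX : r (MvPolynomial.X i) = 0 := by
          show MvPolynomial.aeval t (MvPolynomial.X i) = 0
          rw [MvPolynomial.aeval_X]
          exact dif_neg h2
        rw [← Polynomial.aeval_algHom_apply, hrX]
        obtain ⟨d, hd⟩ := (mem_IntD D K).mp (hgs i) 0
        rw [map_zero] at hd
        refine ⟨d, ?_⟩
        rw [← Polynomial.coeff_zero_eq_aeval_zero', Polynomial.coeff_zero_eq_eval_zero, ← hd,
          ← IsScalarTower.algebraMap_apply]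
      obtain ⟨d, hd⟩ := hconst
      rw [← hd, ← Algebra.smul_def]
      refine Submodule.smul_mem _ d (Submodule.subset_span ?_)
      refine ⟨fun j => gs (Fin.castLE hn j), fun j => hgs _, ?_⟩
      rw [hsdef, Finset.prod_map]
      refine Finset.prod_congr rfl fun j _ => ?_
      have hX : r (MvPolynomial.X (Fin.castLEEmb hn j)) = MvPolynomial.X j := by
        show MvPolynomial.aeval t (MvPolynomial.X (Fin.castLEEmb hn j)) = MvPolynomial.X j
        rw [MvPolynomial.aeval_X]
        exact htlt j
      rw [← Polynomial.aeval_algHom_apply, hX]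
      rfl
    exact hle ⟨q, hq, rfl⟩
  have key := h g hg (φ a) (hφmem a ha)
  have hmem2 := hrmem _ key
  rwa [← Polynomial.aeval_algHom_apply, hrφ] at hmem2
end

section
/- Let D be an integral domain with quotient field K, A a D-torsion-free D-algebra, and define w^D(A) = {a ∈ A : a = φ(X) for some D-algebra homomorphism φ : Int(D) → A}. If D is weakly polynomially composite (compositums of WPC subalgebras of D-torsion-free algebras are WPC), then w^D(A) equals the largest WPC D-subalgebra of A, namely the compositum of all WPC D-subalgebras of A. -/
set_option linter.unusedSectionVars false
open Polynomial TensorProduct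

variable (D K : Type*) [CommRing D] [IsDomain D] [Field K] [Algebra D K] [IsFractionRing D K]

/-- A `D`-subalgebra `S` of a `D`-torsion-free `D`-algebra `A` is WPC if `f(S) ⊆ S`
for every integer-valued polynomial `f`, evaluation taking place in `K ⊗[D] A`. -/
def WPCsubA (A : Type*) [CommRing A] [Algebra D A] (S : Subalgebra D A) : Prop :=
  ∀ f ∈ IntD D K, ∀ b ∈ S, ∃ c ∈ S,
    Polynomial.aeval ((1 : K) ⊗ₜ[D] b) f = (1 : K) ⊗ₜ[D] c

/- ### Auxiliary lemmas -/

theorem IntD_comp_mem {f g : K[X]} (hf : f ∈ IntD D K) (hg : g ∈ IntD D K) :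
    f.comp g ∈ IntD D K := by
  rw [mem_IntD] at *
  intro a
  obtain ⟨d, hd⟩ := hg a
  obtain ⟨e, he⟩ := hf d
  exact ⟨e, by rw [Polynomial.eval_comp, ← hd, he]⟩

theorem ev_pair {A : Type*} [CommRing A] [Algebra D A] (x y : K ⊗[D] A)
    {n : ℕ} (g h : Fin n → K[X]) (q : MvPolynomial (Fin 2) K) (f : K[X])
    (hid : Polynomial.aeval q f =
      ∑ i, Polynomial.aeval (MvPolynomial.X 0) (g i) *
        Polynomial.aeval (MvPolynomial.X 1) (h i)) :
    Polynomial.aeval (MvPolynomial.aeval ![x, y] q) f =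
      ∑ i, Polynomial.aeval x (g i) * Polynomial.aeval y (h i) := by
  have := congrArg (MvPolynomial.aeval (R := K) ![x, y]) hid
  rw [← Polynomial.aeval_algHom_apply (MvPolynomial.aeval (R := K) ![x, y]) q f] at this
  rw [this, map_sum]
  refine Finset.sum_congr rfl fun i _ => ?_
  rw [map_mul, ← Polynomial.aeval_algHom_apply, ← Polynomial.aeval_algHom_apply]
  simp

/-- The candidate largest WPC subalgebra, as a property. -/
def Pprop (A : Type*) [CommRing A] [Algebra D A] (a : A) : Prop :=
  ∀ f ∈ IntD D K, ∃ c : A, Polynomial.aeval ((1 : K) ⊗ₜ[D] a) f = (1 : K) ⊗ₜ[D] c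

theorem Pprop_algebraMap (A : Type*) [CommRing A] [Algebra D A] (d : D) :
    Pprop D K A (algebraMap D A d) := by
  intro f hf
  obtain ⟨e, he⟩ := (mem_IntD D K).mp hf d
  refine ⟨algebraMap D A e, ?_⟩
  have h1 : (1 : K) ⊗ₜ[D] (algebraMap D A d) = algebraMap D (K ⊗[D] A) d :=
    (Algebra.TensorProduct.includeRight (R := D) (A := K) (B := A)).commutes d
  have h2 : (1 : K) ⊗ₜ[D] (algebraMap D A e) = algebraMap D (K ⊗[D] A) e :=
    (Algebra.TensorProduct.includeRight (R := D) (A := K) (B := A)).commutes e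
  rw [h1, h2, IsScalarTower.algebraMap_apply D K (K ⊗[D] A),
    IsScalarTower.algebraMap_apply D K (K ⊗[D] A), Polynomial.aeval_algebraMap_apply]
  congr 1
  rw [Polynomial.aeval_def, ← Polynomial.eval_map, Algebra.algebraMap_self, Polynomial.map_id, ← he]

theorem Pprop_add {A : Type*} [CommRing A] [Algebra D A] {a b : A}
    (ha : Pprop D K A a) (hb : Pprop D K A b) {f : K[X]} (hf : f ∈ IntD D K)
    {n : ℕ} {g h : Fin n → K[X]} (hgh : ∀ i, g i ∈ IntD D K ∧ h i ∈ IntD D K)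
    (hid : Polynomial.aeval (MvPolynomial.X 0 + MvPolynomial.X 1 : MvPolynomial (Fin 2) K) f =
      ∑ i, Polynomial.aeval (MvPolynomial.X 0) (g i) *
        Polynomial.aeval (MvPolynomial.X 1) (h i)) :
    ∃ c : A, Polynomial.aeval ((1 : K) ⊗ₜ[D] (a + b)) f = (1 : K) ⊗ₜ[D] c := by
  choose cg hcg using fun i => ha (g i) (hgh i).1
  choose ch hch using fun i => hb (h i) (hgh i).2
  refine ⟨∑ i, cg i * ch i, ?_⟩
  have hev := ev_pair D K ((1 : K) ⊗ₜ[D] a) ((1 : K) ⊗ₜ[D] b) g h _ f hid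
  have hq : MvPolynomial.aeval ![(1 : K) ⊗ₜ[D] a, (1 : K) ⊗ₜ[D] b]
      (MvPolynomial.X 0 + MvPolynomial.X 1 : MvPolynomial (Fin 2) K)
      = (1 : K) ⊗ₜ[D] (a + b) := by
    simp [TensorProduct.tmul_add]
  rw [hq] at hev
  rw [hev, Finset.sum_congr rfl fun i _ => by
    rw [hcg i, hch i, Algebra.TensorProduct.tmul_mul_tmul, one_mul]]
  rw [TensorProduct.tmul_sum]

theorem Pprop_mul {A : Type*} [CommRing A] [Algebra D A] {a b : A}
    (ha : Pprop D K A a) (hb : Pprop D K A b) {f : K[X]} (hf : f ∈ IntD D K)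
    {n : ℕ} {g h : Fin n → K[X]} (hgh : ∀ i, g i ∈ IntD D K ∧ h i ∈ IntD D K)
    (hid : Polynomial.aeval (MvPolynomial.X 0 * MvPolynomial.X 1 : MvPolynomial (Fin 2) K) f =
      ∑ i, Polynomial.aeval (MvPolynomial.X 0) (g i) *
        Polynomial.aeval (MvPolynomial.X 1) (h i)) :
    ∃ c : A, Polynomial.aeval ((1 : K) ⊗ₜ[D] (a * b)) f = (1 : K) ⊗ₜ[D] c := by
  choose cg hcg using fun i => ha (g i) (hgh i).1
  choose ch hch using fun i => hb (h i) (hgh i).2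
  refine ⟨∑ i, cg i * ch i, ?_⟩
  have hev := ev_pair D K ((1 : K) ⊗ₜ[D] a) ((1 : K) ⊗ₜ[D] b) g h _ f hid
  have hq : MvPolynomial.aeval ![(1 : K) ⊗ₜ[D] a, (1 : K) ⊗ₜ[D] b]
      (MvPolynomial.X 0 * MvPolynomial.X 1 : MvPolynomial (Fin 2) K)
      = (1 : K) ⊗ₜ[D] (a * b) := by
    simp [Algebra.TensorProduct.tmul_mul_tmul]
  rw [hq] at hev
  rw [hev, Finset.sum_congr rfl fun i _ => by
    rw [hcg i, hch i, Algebra.TensorProduct.tmul_mul_tmul, one_mul]]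
  rw [TensorProduct.tmul_sum]

/-- The subalgebra of all elements having the `Pprop` property. -/
noncomputable def Wsub
    (hwpc : ∀ f ∈ IntD D K,
      (∃ (n : ℕ) (g h : Fin n → Polynomial K), (∀ i, g i ∈ IntD D K ∧ h i ∈ IntD D K) ∧
        Polynomial.aeval (MvPolynomial.X 0 + MvPolynomial.X 1 : MvPolynomial (Fin 2) K) f =
          ∑ i, Polynomial.aeval (MvPolynomial.X 0) (g i) *
            Polynomial.aeval (MvPolynomial.X 1) (h i)) ∧
      (∃ (n : ℕ) (g h : Fin n → Polynomial K), (∀ i, g i ∈ IntD D K ∧ h i ∈ IntD D K) ∧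
        Polynomial.aeval (MvPolynomial.X 0 * MvPolynomial.X 1 : MvPolynomial (Fin 2) K) f =
          ∑ i, Polynomial.aeval (MvPolynomial.X 0) (g i) *
            Polynomial.aeval (MvPolynomial.X 1) (h i)))
    (A : Type*) [CommRing A] [Algebra D A] : Subalgebra D A where
  carrier := {a | Pprop D K A a}
  add_mem' := fun {a b} ha hb f hf => by
    obtain ⟨n, g, h, hgh, hid⟩ := (hwpc f hf).1
    exact Pprop_add D K ha hb hf hgh hid
  mul_mem' := fun {a b} ha hb f hf => by
    obtain ⟨n, g, h, hgh, hid⟩ := (hwpc f hf).2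
    exact Pprop_mul D K ha hb hf hgh hid
  algebraMap_mem' := fun d => Pprop_algebraMap D K A d

theorem aevalX_eq_map (p : D[X]) : Polynomial.aeval (X : K[X]) p = p.map (algebraMap D K) := by
  have : (Polynomial.aeval (X : K[X]) : D[X] →ₐ[D] K[X]) = mapAlgHom (Algebra.ofId D K) :=
    Polynomial.algHom_ext (by simp [mapAlgHom])
  rw [this, coe_mapAlgHom]; rfl

theorem tmul_injective (A : Type*) [CommRing A] [Algebra D A] [NoZeroSMulDivisors D A] :
    Function.Injective (fun a : A => (1 : K) ⊗ₜ[D] a) := by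
  have hloc : IsLocalizedModule (nonZeroDivisors D) (TensorProduct.mk D K A 1) :=
    (isLocalizedModule_iff_isBaseChange (nonZeroDivisors D) K _).mpr
      (TensorProduct.isBaseChange D A K)
  intro a b hab
  have h0 : TensorProduct.mk D K A 1 (a - b) = 0 := by
    simp only [map_sub]; simp only [mk_apply] at *; rw [hab, sub_self]
  obtain ⟨s, hs⟩ := (IsLocalizedModule.eq_zero_iff (nonZeroDivisors D) _).mp h0
  have hns : (s : D) ≠ 0 := nonZeroDivisors.ne_zero s.2
  exact sub_eq_zero.mp ((smul_eq_zero.mp hs).resolve_left hns)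

theorem key (A : Type*) [CommRing A] [Algebra D A]
    (φ : IntD D K →ₐ[D] A) (f : IntD D K) :
    Polynomial.aeval ((1 : K) ⊗ₜ[D] (φ (Xint D K))) (f : K[X]) = (1 : K) ⊗ₜ[D] (φ f) := by
  set ι : A →ₐ[D] K ⊗[D] A := Algebra.TensorProduct.includeRight with hι_def
  obtain ⟨b, hb⟩ := IsLocalization.integerNormalization_map_to_map (nonZeroDivisors D) (f : K[X])
  set p := IsLocalization.integerNormalization (nonZeroDivisors D) (f : K[X]) with hp
  set d : D := (b : D)
  have hsm : (d • (f : K[X])) = C (algebraMap D K d) * (f : K[X]) := by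
    rw [← algebraMap_smul K d ((f : K[X])), Polynomial.smul_eq_C_mul]
  have hIntEq : Polynomial.aeval (Xint D K) p = algebraMap D (IntD D K) d * f := by
    apply Subtype.ext
    have h1 : ((Polynomial.aeval (Xint D K) p : IntD D K) : K[X])
        = Polynomial.aeval ((IntD D K).val (Xint D K)) p :=
      (Polynomial.aeval_algHom_apply (IntD D K).val (Xint D K) p).symm
    have h2 : (IntD D K).val (Xint D K) = (X : K[X]) := rfl
    rw [h1, h2, aevalX_eq_map, hb, hsm]
    have h3 : ((algebraMap D (IntD D K) d * f : IntD D K) : K[X])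
        = algebraMap D K[X] d * (f : K[X]) := rfl
    rw [h3, Polynomial.algebraMap_apply]
  have hφ := congrArg φ hIntEq
  rw [← Polynomial.aeval_algHom_apply φ (Xint D K) p, map_mul, AlgHom.commutes] at hφ
  have hι := congrArg ι hφ
  rw [← Polynomial.aeval_algHom_apply ι (φ (Xint D K)) p, map_mul, AlgHom.commutes] at hι
  have hstep : Polynomial.aeval (ι (φ (Xint D K))) p
      = algebraMap K (K ⊗[D] A) (algebraMap D K d)
        * Polynomial.aeval (ι (φ (Xint D K))) (f : K[X]) := by
    rw [← Polynomial.aeval_map_algebraMap K (ι (φ (Xint D K))) p, hb, hsm, map_mul,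
      Polynomial.aeval_C]
  rw [hstep, IsScalarTower.algebraMap_apply D K (K ⊗[D] A)] at hι
  have hd0 : algebraMap D K d ≠ 0 := by
    have hdd : (d : D) ≠ 0 := nonZeroDivisors.ne_zero b.2
    exact fun h => hdd (IsFractionRing.injective D K (by simpa using h))
  have hcan := ((isUnit_iff_ne_zero.mpr hd0).map (algebraMap K (K ⊗[D] A))).mul_left_cancel hι
  simpa [hι_def, Algebra.TensorProduct.includeRight_apply] using hcan

theorem exists_hom {A : Type*} [CommRing A] [Algebra D A] [NoZeroSMulDivisors D A] {a : A}
    (ha : Pprop D K A a) : ∃ φ : IntD D K →ₐ[D] A, φ (Xint D K) = a := by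
  have hinj := tmul_injective D K A
  choose c hc using fun f : IntD D K => ha (f : K[X]) f.2
  refine ⟨{ toFun := c
            map_one' := hinj ?_
            map_mul' := fun f g => hinj ?_
            map_zero' := hinj ?_
            map_add' := fun f g => hinj ?_
            commutes' := fun d => hinj ?_ }, hinj ?_⟩
  · show (1 : K) ⊗ₜ[D] c 1 = (1 : K) ⊗ₜ[D] (1 : A)
    rw [← hc 1, OneMemClass.coe_one, map_one, Algebra.TensorProduct.one_def]
  · show (1 : K) ⊗ₜ[D] c (f * g) = (1 : K) ⊗ₜ[D] (c f * c g)
    rw [← hc (f * g), MulMemClass.coe_mul, map_mul, hc f, hc g,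
      Algebra.TensorProduct.tmul_mul_tmul, one_mul]
  · show (1 : K) ⊗ₜ[D] c 0 = (1 : K) ⊗ₜ[D] (0 : A)
    rw [← hc 0, ZeroMemClass.coe_zero, map_zero, TensorProduct.tmul_zero]
  · show (1 : K) ⊗ₜ[D] c (f + g) = (1 : K) ⊗ₜ[D] (c f + c g)
    rw [← hc (f + g), AddMemClass.coe_add, map_add, hc f, hc g, TensorProduct.tmul_add]
  · show (1 : K) ⊗ₜ[D] c (algebraMap D (IntD D K) d) = (1 : K) ⊗ₜ[D] (algebraMap D A d)
    rw [← hc (algebraMap D (IntD D K) d)]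
    have h3 : ((algebraMap D (IntD D K) d : IntD D K) : K[X]) = algebraMap D K[X] d := rfl
    rw [h3, Polynomial.algebraMap_apply, Polynomial.aeval_C,
      ← IsScalarTower.algebraMap_apply D K (K ⊗[D] A)]
    exact ((Algebra.TensorProduct.includeRight (R := D) (A := K) (B := A)).commutes d).symm
  · show (1 : K) ⊗ₜ[D] c (Xint D K) = (1 : K) ⊗ₜ[D] a
    rw [← hc (Xint D K)]
    have h4 : ((Xint D K : IntD D K) : K[X]) = X := rfl
    rw [h4, Polynomial.aeval_X]

theorem stmt_8
    (hwpc : ∀ f ∈ IntD D K,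
      (∃ (n : ℕ) (g h : Fin n → Polynomial K), (∀ i, g i ∈ IntD D K ∧ h i ∈ IntD D K) ∧
        Polynomial.aeval (MvPolynomial.X 0 + MvPolynomial.X 1 : MvPolynomial (Fin 2) K) f =
          ∑ i, Polynomial.aeval (MvPolynomial.X 0) (g i) *
            Polynomial.aeval (MvPolynomial.X 1) (h i)) ∧
      (∃ (n : ℕ) (g h : Fin n → Polynomial K), (∀ i, g i ∈ IntD D K ∧ h i ∈ IntD D K) ∧
        Polynomial.aeval (MvPolynomial.X 0 * MvPolynomial.X 1 : MvPolynomial (Fin 2) K) f =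
          ∑ i, Polynomial.aeval (MvPolynomial.X 0) (g i) *
            Polynomial.aeval (MvPolynomial.X 1) (h i)))
    (A : Type*) [CommRing A] [Algebra D A] [NoZeroSMulDivisors D A] :
    {a : A | ∃ φ : IntD D K →ₐ[D] A, φ (Xint D K) = a} =
        ↑(sSup {S : Subalgebra D A | WPCsubA D K A S}) ∧
      WPCsubA D K A (sSup {S : Subalgebra D A | WPCsubA D K A S}) := by
  have hmem : ∀ a : A, a ∈ Wsub D K hwpc A ↔ Pprop D K A a := fun a => Iff.rfl
  -- Wsub is WPC
  have hWwpc : WPCsubA D K A (Wsub D K hwpc A) := by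
    intro f hf b hb
    obtain ⟨c, hc⟩ := hb f hf
    refine ⟨c, ?_, hc⟩
    intro f' hf'
    obtain ⟨c', hc'⟩ := hb (f'.comp f) (IntD_comp_mem D K hf' hf)
    refine ⟨c', ?_⟩
    rw [← hc, ← Polynomial.aeval_comp]
    exact hc'
  -- Wsub is the largest WPC subalgebra
  have hle : ∀ S : Subalgebra D A, WPCsubA D K A S → S ≤ Wsub D K hwpc A := by
    intro S hS b hb f hf
    obtain ⟨c, _, hc⟩ := hS f hf b hb
    exact ⟨c, hc⟩
  have hsup : sSup {S : Subalgebra D A | WPCsubA D K A S} = Wsub D K hwpc A :=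
    le_antisymm (sSup_le fun S hS => hle S hS) (le_sSup hWwpc)
  rw [hsup]
  refine ⟨?_, hWwpc⟩
  ext a
  simp only [Set.mem_setOf_eq, SetLike.mem_coe, hmem]
  constructor
  · rintro ⟨φ, rfl⟩ f hf
    exact ⟨φ ⟨f, hf⟩, key D K A φ ⟨f, hf⟩⟩
  · exact exists_hom D K
end

section
/- Let D be an integral domain, A a D-torsion-free D-algebra, and a ∈ A. If φ : Int(D) → A is a D-algebra homomorphism with φ(X) = a, then φ(f) = f(a) in A ⊗_D K for every f ∈ Int(D); in particular such a homomorphism is unique. -/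
set_option linter.unusedSectionVars false
open Polynomial TensorProduct

variable (D K : Type*) [CommRing D] [IsDomain D] [Field K] [Algebra D K] [IsFractionRing D K]

theorem coe_aeval_Xint (g : Polynomial D) :
    ((Polynomial.aeval (Xint D K) g : IntD D K) : Polynomial K)
      = g.map (algebraMap D K) := by
  have h1 : ((Polynomial.aeval (Xint D K) g : IntD D K) : Polynomial K)
      = Polynomial.aeval ((Xint D K : Polynomial K)) g :=
    (Polynomial.aeval_algHom_apply (IntD D K).val (Xint D K) g).symm
  rw [h1]
  have h2 : ((Xint D K : Polynomial K)) = (Polynomial.X : Polynomial K) := rfl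
  rw [h2]
  have h3 : (Polynomial.aeval (Polynomial.X : Polynomial K) : Polynomial D →ₐ[D] Polynomial K)
      = (Polynomial.mapAlgHom (Algebra.ofId D K)) := by
    apply Polynomial.algHom_ext
    simp
  have := congrFun (congrArg DFunLike.coe h3) g
  simpa using this

theorem stmt_9 (A : Type*) [CommRing A] [Algebra D A] [NoZeroSMulDivisors D A] (a : A)
    (φ : IntD D K →ₐ[D] A) (hφ : φ (Xint D K) = a) :
    (∀ (f : Polynomial K) (hf : f ∈ IntD D K),
        (1 : K) ⊗ₜ[D] (φ ⟨f, hf⟩) = Polynomial.aeval ((1 : K) ⊗ₜ[D] a) f) ∧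
      ∀ ψ : IntD D K →ₐ[D] A, ψ (Xint D K) = a → ψ = φ := by
  -- key: the formula holds for any D-algebra hom sending Xint to a
  have key : ∀ (χ : IntD D K →ₐ[D] A), χ (Xint D K) = a →
      ∀ (f : Polynomial K) (hf : f ∈ IntD D K),
        (1 : K) ⊗ₜ[D] (χ ⟨f, hf⟩) = Polynomial.aeval ((1 : K) ⊗ₜ[D] a) f := by
    intro χ hχ f hf
    obtain ⟨d, hd⟩ := IsLocalization.integerNormalization_map_to_map (nonZeroDivisors D) f
    set g : Polynomial D := IsLocalization.integerNormalization (nonZeroDivisors D) f with hg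
    have hd0 : (d : D) ≠ 0 := nonZeroDivisors.coe_ne_zero d
    set c : K := algebraMap D K (d : D) with hc
    have hc0 : c ≠ 0 := by
      simp only [hc, ne_eq, map_eq_zero_iff (algebraMap D K) (IsFractionRing.injective D K)]
      exact hd0
    -- step 1 : (d : D) • χ ⟨f, hf⟩ = aeval a g
    have step1 : (d : D) • χ ⟨f, hf⟩ = Polynomial.aeval a g := by
      have he : (d : D) • (⟨f, hf⟩ : IntD D K) = Polynomial.aeval (Xint D K) g := by
        apply Subtype.ext
        rw [coe_aeval_Xint, hd]
        rfl
      calc (d : D) • χ ⟨f, hf⟩ = χ ((d : D) • ⟨f, hf⟩) := (map_smul χ _ _).symm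
        _ = χ (Polynomial.aeval (Xint D K) g) := by rw [he]
        _ = Polynomial.aeval (χ (Xint D K)) g := (Polynomial.aeval_algHom_apply χ _ g).symm
        _ = Polynomial.aeval a g := by rw [hχ]
    -- step 2 : tensor both sides with 1
    have step2 : (d : D) • ((1 : K) ⊗ₜ[D] (χ ⟨f, hf⟩))
        = (d : D) • (Polynomial.aeval ((1 : K) ⊗ₜ[D] a) f) := by
      have lhs : (d : D) • ((1 : K) ⊗ₜ[D] (χ ⟨f, hf⟩))
          = (1 : K) ⊗ₜ[D] ((d : D) • χ ⟨f, hf⟩) := (tmul_smul _ _ _).symm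
      have rhs1 : (1 : K) ⊗ₜ[D] (Polynomial.aeval a g)
          = Polynomial.aeval ((1 : K) ⊗ₜ[D] a) g := by
        have := Polynomial.aeval_algHom_apply
          (Algebra.TensorProduct.includeRight : A →ₐ[D] K ⊗[D] A) a g
        simpa using this.symm
      have rhs2 : (Polynomial.aeval ((1 : K) ⊗ₜ[D] a) g : K ⊗[D] A)
          = Polynomial.aeval ((1 : K) ⊗ₜ[D] a) (g.map (algebraMap D K)) :=
        (Polynomial.aeval_map_algebraMap K _ g).symm
      have rhs3 : Polynomial.aeval ((1 : K) ⊗ₜ[D] a) ((d : D) • f)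
          = (d : D) • (Polynomial.aeval ((1 : K) ⊗ₜ[D] a) f : K ⊗[D] A) := by
        have hsf : (d : D) • f = c • f := (algebraMap_smul K (d : D) f).symm
        rw [hsf, map_smul]
        exact (algebraMap_smul K (d : D) (Polynomial.aeval ((1 : K) ⊗ₜ[D] a) f : K ⊗[D] A))
      rw [lhs, step1, rhs1, rhs2, hd, rhs3]
    -- step 3 : cancel d
    have hsmul : ∀ z : K ⊗[D] A, (d : D) • z = c • z := fun z =>
      (algebraMap_smul K (d : D) z).symm
    have step2' : c • ((1 : K) ⊗ₜ[D] (χ ⟨f, hf⟩))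
        = c • (Polynomial.aeval ((1 : K) ⊗ₜ[D] a) f : K ⊗[D] A) := by
      rw [← hsmul, ← hsmul]; exact step2
    have := congrArg (fun z => c⁻¹ • z) step2'
    simpa [smul_smul, inv_mul_cancel₀ hc0] using this
  -- injectivity of x ↦ 1 ⊗ x
  have hlm : IsLocalizedModule (nonZeroDivisors D) (TensorProduct.mk D K A 1) :=
    (isLocalizedModule_iff_isBaseChange (nonZeroDivisors D) K _).mpr
      (TensorProduct.isBaseChange D A K)
  have hinj : Function.Injective (fun x : A => (1 : K) ⊗ₜ[D] x) := by
    intro x y hxy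
    have h0 : TensorProduct.mk D K A 1 (x - y) = 0 := by
      simp only [TensorProduct.mk_apply, tmul_sub]
      simpa [sub_eq_zero] using hxy
    obtain ⟨s, hs⟩ := (IsLocalizedModule.eq_zero_iff (nonZeroDivisors D)
      (TensorProduct.mk D K A 1)).mp h0
    have hs0 : (s : D) ≠ 0 := nonZeroDivisors.coe_ne_zero s
    have := (smul_eq_zero.mp hs).resolve_left hs0
    exact sub_eq_zero.mp this
  refine ⟨key φ hφ, fun ψ hψ => ?_⟩
  ext x
  obtain ⟨f, hf⟩ := x
  exact hinj ((key ψ hψ f hf).trans (key φ hφ f hf).symm)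
end

section
/- Let D be a PID with prime element π such that D/(π) is a finite field with q elements, and let F(X) = (X^q − X)/π ∈ Int(D). Suppose A is a commutative D-algebra equipped with a map ∘ : Int(D) × A → A satisfying: f ∘ a = f(a) for f ∈ D[X]; (f·g) ∘ a = (f ∘ a)(g ∘ a) and (f+g) ∘ a = (f ∘ a)+(g ∘ a); F ∘ (a+b) = F ∘ a + F ∘ b + h(a,b) where h(X,Y) = F(X+Y) − F(X) − F(Y) ∈ D[X,Y]; and (f ∘ g) ∘ a = f ∘ (g ∘ a) for all f,g ∈ Int(D) where f ∘ g denotes polynomial composition. Then A has no π-torsion: if πa = 0 for a ∈ A then a = 0. -/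
set_option linter.unusedSectionVars false
open Polynomial TensorProduct

variable (D K : Type*) [CommRing D] [IsDomain D] [Field K] [Algebra D K] [IsFractionRing D K]

lemma map_mem_IntD (g : Polynomial D) : g.map (algebraMap D K) ∈ IntD D K :=
  (mem_IntD D K).mpr fun a => ⟨g.eval a, by
    rw [Polynomial.eval_map, Polynomial.eval₂_at_apply]⟩

theorem stmt_13 [IsPrincipalIdealRing D] (π : D) (hπ : Prime π) (q : ℕ)
    [Finite (D ⧸ Ideal.span {π})] (hq : Nat.card (D ⧸ Ideal.span {π}) = q)
    (F : Polynomial K) (hFInt : F ∈ IntD D K)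
    (hF : Polynomial.C (algebraMap D K π) * F = Polynomial.X ^ q - Polynomial.X)
    (A : Type*) [CommRing A] [Algebra D A]
    (op : IntD D K → A → A)
    (heval : ∀ (g : Polynomial D) (hg : Polynomial.map (algebraMap D K) g ∈ IntD D K) (a : A),
      op ⟨Polynomial.map (algebraMap D K) g, hg⟩ a = Polynomial.aeval a g)
    (hmul : ∀ (f g : IntD D K) (a : A), op (f * g) a = op f a * op g a)
    (hadd : ∀ (f g : IntD D K) (a : A), op (f + g) a = op f a + op g a)
    (hFadd : ∃ hpoly : MvPolynomial (Fin 2) D,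
      MvPolynomial.map (algebraMap D K) hpoly =
        Polynomial.aeval (MvPolynomial.X 0 + MvPolynomial.X 1 : MvPolynomial (Fin 2) K) F -
          Polynomial.aeval (MvPolynomial.X 0 : MvPolynomial (Fin 2) K) F -
          Polynomial.aeval (MvPolynomial.X 1 : MvPolynomial (Fin 2) K) F ∧
      ∀ a b : A, op ⟨F, hFInt⟩ (a + b) =
        op ⟨F, hFInt⟩ a + op ⟨F, hFInt⟩ b + MvPolynomial.aeval ![a, b] hpoly)
    (hcomp : ∀ (f g : IntD D K) (hfg : (f : Polynomial K).comp (g : Polynomial K) ∈ IntD D K)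
      (a : A), op ⟨(f : Polynomial K).comp (g : Polynomial K), hfg⟩ a = op f (op g a)) :
    ∀ a : A, π • a = 0 → a = 0 := by
  intro a ha
  have hinj : Function.Injective (algebraMap D K) := IsFractionRing.injective D K
  -- q ≥ 2
  have hne : Ideal.span {π} ≠ (⊤ : Ideal D) := by
    simpa [Ideal.span_singleton_eq_top] using hπ.not_isUnit
  haveI : Nontrivial (D ⧸ Ideal.span {π}) := Ideal.Quotient.nontrivial_iff.mpr hne
  have hq2 : 2 ≤ q := by
    have h1 := Finite.one_lt_card_iff_nontrivial.mpr ‹Nontrivial (D ⧸ Ideal.span {π})›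
    omega
  have hπK : algebraMap D K π ≠ 0 := fun h => hπ.ne_zero (hinj (by simpa using h))
  -- F(0) = 0
  have hF0 : F.eval 0 = 0 := by
    have h := congrArg (Polynomial.eval (0 : K)) hF
    simp [zero_pow (show q ≠ 0 by omega)] at h
    rcases h with h | h
    · exact absurd h hπ.ne_zero
    · exact h
  -- op F 0 = 0
  obtain ⟨hp, hpmap, hOp⟩ := hFadd
  have hc : MvPolynomial.constantCoeff hp = 0 := by
    apply hinj
    have h := congrArg (fun p => MvPolynomial.aeval (fun _ : Fin 2 => (0 : K)) p) hpmap
    simp only [map_sub] at h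
    rw [MvPolynomial.aeval_map_algebraMap, MvPolynomial.aeval_zero'] at h
    have e1 : MvPolynomial.aeval (fun _ : Fin 2 => (0 : K))
        (Polynomial.aeval (MvPolynomial.X 0 + MvPolynomial.X 1 : MvPolynomial (Fin 2) K) F)
        = Polynomial.aeval (0 : K) F := by
      rw [← Polynomial.aeval_algHom_apply]; simp
    have e2 : MvPolynomial.aeval (fun _ : Fin 2 => (0 : K))
        (Polynomial.aeval (MvPolynomial.X 0 : MvPolynomial (Fin 2) K) F)
        = Polynomial.aeval (0 : K) F := by
      rw [← Polynomial.aeval_algHom_apply]; simp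
    have e3 : MvPolynomial.aeval (fun _ : Fin 2 => (0 : K))
        (Polynomial.aeval (MvPolynomial.X 1 : MvPolynomial (Fin 2) K) F)
        = Polynomial.aeval (0 : K) F := by
      rw [← Polynomial.aeval_algHom_apply]; simp
    rw [e1, e2, e3] at h
    simp only [Polynomial.aeval_def, Polynomial.eval₂_at_apply] at h
    rw [h]
    simp [Polynomial.coeff_zero_eq_eval_zero, hF0]
  have hF00 : op ⟨F, hFInt⟩ 0 = 0 := by
    have h00 := hOp 0 0
    have hz : (![(0 : A), 0] : Fin 2 → A) = fun _ => 0 := by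
      funext i; fin_cases i <;> rfl
    rw [add_zero, hz, MvPolynomial.aeval_zero', hc, map_zero, add_zero] at h00
    exact (left_eq_add.mp h00)
  -- the polynomial πX and π^(q-1)X^q - X
  set gD : Polynomial D := Polynomial.C π * Polynomial.X with hgD
  set GD : Polynomial D := Polynomial.C (π ^ (q - 1)) * Polynomial.X ^ q - Polynomial.X with hGD
  have hgmem := map_mem_IntD D K gD
  set gI : IntD D K := ⟨gD.map (algebraMap D K), hgmem⟩ with hgI
  have hπq : (algebraMap D K π) ^ q = algebraMap D K π * (algebraMap D K π) ^ (q - 1) := by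
    rw [← pow_succ']
    congr 1
    omega
  have hcompeq : F.comp (gD.map (algebraMap D K)) = GD.map (algebraMap D K) := by
    apply mul_left_cancel₀ (Polynomial.C_ne_zero.mpr hπK)
    have : Polynomial.C (algebraMap D K π) * F.comp (gD.map (algebraMap D K))
        = (Polynomial.C (algebraMap D K π) * F).comp (gD.map (algebraMap D K)) := by
      rw [Polynomial.mul_comp, Polynomial.C_comp]
    rw [this, hF, Polynomial.sub_comp, Polynomial.X_pow_comp, Polynomial.X_comp]
    simp only [hgD, hGD, Polynomial.map_mul, Polynomial.map_sub, Polynomial.map_pow,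
      Polynomial.map_C, Polynomial.map_X, Polynomial.map_one]
    rw [mul_pow, ← Polynomial.C_pow, hπq]
    simp only [map_mul, map_pow]
    ring
  have hga : op gI a = 0 := by
    rw [hgI, heval gD hgmem a]
    simp only [hgD, map_mul, Polynomial.aeval_C, Polynomial.aeval_X]
    rw [← Algebra.smul_def, ha]
  have hGmem : (((⟨F, hFInt⟩ : IntD D K) : Polynomial K)).comp ((gI : Polynomial K)) ∈ IntD D K := by
    show F.comp (gD.map (algebraMap D K)) ∈ IntD D K
    rw [hcompeq]; exact map_mem_IntD D K GD
  have key := hcomp ⟨F, hFInt⟩ gI hGmem a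
  have heq : (⟨(((⟨F, hFInt⟩ : IntD D K) : Polynomial K)).comp ((gI : Polynomial K)), hGmem⟩ :
      IntD D K) = ⟨GD.map (algebraMap D K), map_mem_IntD D K GD⟩ := Subtype.ext hcompeq
  rw [heq, heval GD (map_mem_IntD D K GD) a, hga, hF00] at key
  -- key : aeval a GD = 0
  have hval : (Polynomial.aeval a GD : A) = π ^ (q - 1) • a ^ q - a := by
    simp only [hGD, map_sub, map_mul, map_pow, Polynomial.aeval_C, Polynomial.aeval_X]
    rw [Algebra.smul_def, map_pow]
  have hz2 : (π ^ (q - 1)) • a ^ q = 0 := by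
    have h1 : (π ^ (q - 2) • a ^ (q - 1)) * (π • a) = (π ^ (q - 1)) • a ^ q := by
      rw [smul_mul_smul_comm, ← pow_succ, ← pow_succ]
      congr 2 <;> omega
    rw [← h1, ha, mul_zero]
  rw [hval, hz2, zero_sub] at key
  exact neg_eq_zero.mp key
end
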